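/- arXiv:1810.11251 — 4 statements merged into one kernel-verified Lean document; each statement's English description precedes it below -/
import Mathlib

section
/- Let S ⊆ ℕ and let 𝒫_S be the set of primes p such that for every n ∈ S, p ∣ n implies p² ∣ n. Let ℓ ∈ ℤ and k, g ∈ ℕ with g ≥ 1, and suppose ℓ + r·g ∈ S for all integers r with 0 ≤ r < k. Then every prime p ∈ 𝒫_S with 2p ≤ k divides g. -/
/-- If every term of the progression `ℓ, ℓ+g, …, ℓ+(k-1)g` lies in `S ⊆ ℕ`, and `p` is a prime
such that every element of `S` divisible by `p` is divisible by `p²`, and `2p ≤ k`,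
then `p ∣ g`. -/
theorem prime_of_PS_divides_common_difference
    (S : Set ℕ) (ℓ : ℤ) (k g : ℕ) (hg : 1 ≤ g)
    (hAP : ∀ r : ℕ, r < k → ∃ n ∈ S, (n : ℤ) = ℓ + (r : ℤ) * (g : ℤ))
    (p : ℕ) (hp : p.Prime) (hpS : ∀ n ∈ S, p ∣ n → p ^ 2 ∣ n)
    (hpk : 2 * p ≤ k) : p ∣ g := by
  by_contra hnd
  haveI : Fact p.Prime := ⟨hp⟩
  have hgu : (g : ZMod p) ≠ 0 := by
    simpa [ZMod.natCast_eq_zero_iff] using hnd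
  set r₀ : ℕ := ((-ℓ : ZMod p) * (g : ZMod p)⁻¹).val with hr₀
  have hr₀lt : r₀ < p := ZMod.val_lt _
  -- key congruence: ℓ + r₀ g ≡ 0 mod p
  have hkey : ((ℓ + (r₀ : ℤ) * g : ℤ) : ZMod p) = 0 := by
    push_cast
    rw [hr₀, ZMod.natCast_val, ZMod.cast_id]
    field_simp
    ring
  obtain ⟨n₁, hn₁S, hn₁⟩ := hAP r₀ (lt_of_lt_of_le (by omega) hpk)
  obtain ⟨n₂, hn₂S, hn₂⟩ := hAP (r₀ + p) (lt_of_lt_of_le (by omega) hpk)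
  have hpn₁ : p ∣ n₁ := by
    have : ((n₁ : ℤ) : ZMod p) = 0 := by rw [hn₁]; exact_mod_cast hkey
    exact_mod_cast (ZMod.natCast_eq_zero_iff n₁ p).mp (by exact_mod_cast this)
  have hpn₂ : p ∣ n₂ := by
    have : ((n₂ : ℤ) : ZMod p) = 0 := by
      rw [hn₂]
      push_cast
      have := hkey
      push_cast at this
      linear_combination this + (g:ZMod p) * (ZMod.natCast_self p)
    exact_mod_cast (ZMod.natCast_eq_zero_iff n₂ p).mp (by exact_mod_cast this)
  have h1 : (p : ℤ) ^ 2 ∣ (n₁ : ℤ) := by exact_mod_cast hpS n₁ hn₁S hpn₁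
  have h2 : (p : ℤ) ^ 2 ∣ (n₂ : ℤ) := by exact_mod_cast hpS n₂ hn₂S hpn₂
  have hdiff : (p : ℤ) ^ 2 ∣ (p : ℤ) * g := by
    have : (n₂ : ℤ) - n₁ = (p : ℤ) * g := by rw [hn₁, hn₂]; push_cast; ring
    calc (p : ℤ) ^ 2 ∣ (n₂ : ℤ) - n₁ := dvd_sub h2 h1
    _ = (p : ℤ) * g := this
  have : (p : ℤ) ∣ g := by
    have hp0 : (p : ℤ) ≠ 0 := by exact_mod_cast hp.ne_zero
    rw [pow_two] at hdiff
    exact (mul_dvd_mul_iff_left hp0).mp hdiff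
  exact hnd (by exact_mod_cast this)
end

section
/- Let S ⊆ ℕ and let 𝒫_S be the set of primes p such that for every n ∈ S, p ∣ n implies p² ∣ n. Suppose there are constants C₁, C₂ > 0 such that Σ_{p ∈ 𝒫_S, p ≤ X} log p ≥ X / C₁ holds for all real X ≥ C₂. Then every arithmetic progression {ℓ + r·g : 0 ≤ r < k} (ℓ ∈ ℤ, g, k ∈ ℕ, g ≥ 1) contained in S satisfies k ≤ 2·max{C₁·log g, C₂}. -/
lemma key_dvd (S : Set ℕ) (ℓ : ℤ) (g k : ℕ)
    (hAP : ∀ r : ℕ, r < k → ∃ n ∈ S, (n : ℤ) = ℓ + (r : ℤ) * (g : ℤ))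
    (p : ℕ) (hp : p.Prime) (hP : ∀ n ∈ S, p ∣ n → p ^ 2 ∣ n)
    (hk : 2 * p ≤ k) : p ∣ g := by
  by_contra hpg
  haveI : Fact p.Prime := ⟨hp⟩
  haveI : NeZero p := ⟨hp.ne_zero⟩
  have hg0 : (g : ZMod p) ≠ 0 := by
    simpa [ZMod.natCast_eq_zero_iff] using hpg
  set a : ZMod p := (-ℓ : ℤ) * (g : ZMod p)⁻¹ with ha
  set r₀ := a.val with hr₀
  have hr₀p : r₀ < p := ZMod.val_lt a
  have hdiv : (p : ℤ) ∣ ℓ + (r₀ : ℤ) * g := by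
    have : ((ℓ + (r₀ : ℤ) * g : ℤ) : ZMod p) = 0 := by
      push_cast
      rw [hr₀, ZMod.natCast_val, ZMod.cast_id, ha]
      field_simp
      push_cast; ring
    exact (ZMod.intCast_zmod_eq_zero_iff_dvd _ _).mp this
  obtain ⟨n₁, hn₁S, hn₁⟩ := hAP r₀ (lt_of_lt_of_le hr₀p (by omega))
  obtain ⟨n₂, hn₂S, hn₂⟩ := hAP (r₀ + p) (by omega)
  have hpn₁ : p ∣ n₁ := by
    rw [← Int.natCast_dvd_natCast]; rw [hn₁]; exact hdiv
  have hpn₂ : p ∣ n₂ := by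
    rw [← Int.natCast_dvd_natCast]; rw [hn₂]
    push_cast
    have : (ℓ : ℤ) + ((r₀ : ℤ) + p) * g = (ℓ + r₀ * g) + p * g := by ring
    rw [this]
    exact dvd_add hdiv ⟨g, rfl⟩
  have h1 := hP n₁ hn₁S hpn₁
  have h2 := hP n₂ hn₂S hpn₂
  have hd : ((p : ℤ))^2 ∣ (n₂ : ℤ) - n₁ := by
    have := Int.natCast_dvd_natCast.mpr h1
    have := Int.natCast_dvd_natCast.mpr h2
    push_cast at *
    exact dvd_sub ‹(p:ℤ)^2 ∣ (n₂:ℤ)› ‹(p:ℤ)^2 ∣ (n₁:ℤ)›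
  have heq : (n₂ : ℤ) - n₁ = p * g := by rw [hn₁, hn₂]; push_cast; ring
  rw [heq, sq] at hd
  have : (p : ℤ) ∣ g := (mul_dvd_mul_iff_left (by exact_mod_cast hp.ne_zero : (p:ℤ) ≠ 0)).mp hd
  exact hpg (Int.natCast_dvd_natCast.mp this)

open scoped Classical in
/-- If the primes `p ∈ 𝒫_S` (those such that `p ∣ n → p² ∣ n` for all `n ∈ S`) satisfy
`∑_{p ∈ 𝒫_S, p ≤ X} log p ≥ X/C₁` for all `X ≥ C₂`, then any arithmetic progression
`{ℓ + r·g : 0 ≤ r < k}` contained in `S` satisfies `k ≤ 2·max(C₁·log g, C₂)`. -/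
theorem ap_length_bound_from_PS_density
    (S : Set ℕ) (C₁ C₂ : ℝ) (hC₁ : 0 < C₁) (hC₂ : 0 < C₂)
    (hdens : ∀ X : ℝ, C₂ ≤ X →
      X / C₁ ≤ ∑ p ∈ (Finset.range (⌊X⌋₊ + 1)).filter
        (fun p => p.Prime ∧ ∀ n ∈ S, p ∣ n → p ^ 2 ∣ n), Real.log p)
    (ℓ : ℤ) (g k : ℕ) (hg : 1 ≤ g)
    (hAP : ∀ r : ℕ, r < k → ∃ n ∈ S, (n : ℤ) = ℓ + (r : ℤ) * (g : ℤ)) :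
    (k : ℝ) ≤ 2 * max (C₁ * Real.log g) C₂ := by
  have key : ∀ p : ℕ, p.Prime → (∀ n ∈ S, p ∣ n → p ^ 2 ∣ n) → 2 * p ≤ k → p ∣ g :=
    fun p hp hP hk => key_dvd S ℓ g k hAP p hp hP hk
  by_contra hlt
  push_neg at hlt
  set M := max (C₁ * Real.log g) C₂ with hM
  have hMC₂ : C₂ ≤ M := le_max_right _ _
  set X : ℝ := (k : ℝ) / 2 with hX
  have hXC₂ : C₂ ≤ X := by
    have : 2 * C₂ ≤ 2 * M := by linarith
    rw [hX]; linarith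
  have hX0 : 0 ≤ X := le_trans hC₂.le hXC₂
  have hsum := hdens X hXC₂
  set F := (Finset.range (⌊X⌋₊ + 1)).filter
      (fun p => p.Prime ∧ ∀ n ∈ S, p ∣ n → p ^ 2 ∣ n) with hF
  have hsub : F ⊆ g.primeFactors := by
    intro p hp
    rw [hF, Finset.mem_filter, Finset.mem_range] at hp
    obtain ⟨hpr, hprime, hprop⟩ := hp
    have hple : (p : ℝ) ≤ X := by
      calc (p : ℝ) ≤ (⌊X⌋₊ : ℝ) := by exact_mod_cast Nat.lt_succ_iff.mp hpr
        _ ≤ X := Nat.floor_le hX0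
    have h2p : 2 * p ≤ k := by
      have : (2 * p : ℝ) ≤ (k : ℝ) := by rw [hX] at hple; push_cast; linarith
      exact_mod_cast this
    exact Nat.mem_primeFactors.mpr ⟨hprime, key p hprime hprop h2p, by omega⟩
  have hsum2 : ∑ p ∈ F, Real.log p ≤ ∑ p ∈ g.primeFactors, Real.log p := by
    apply Finset.sum_le_sum_of_subset_of_nonneg hsub
    intro p hp _
    exact Real.log_nonneg (by exact_mod_cast (Nat.prime_of_mem_primeFactors hp).one_lt.le)
  have hlog : ∑ p ∈ g.primeFactors, Real.log p ≤ Real.log g := by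
    rw [← Real.log_prod (fun p hp => by
      exact_mod_cast (Nat.prime_of_mem_primeFactors hp).ne_zero)]
    apply Real.log_le_log
    · rw [← Nat.cast_prod]
      have : 0 < ∏ p ∈ g.primeFactors, p := Finset.prod_pos
        (fun p hp => (Nat.prime_of_mem_primeFactors hp).pos)
      exact_mod_cast this
    · rw [← Nat.cast_prod]
      exact_mod_cast Nat.le_of_dvd (by omega) (Nat.prod_primeFactors_dvd g)
  have : X / C₁ ≤ Real.log g := le_trans hsum (le_trans hsum2 hlog)
  have : X ≤ C₁ * Real.log g := by
    rw [div_le_iff₀ hC₁] at this; linarith [mul_comm C₁ (Real.log g)]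
  have : X ≤ M := le_trans this (le_max_left _ _)
  rw [hX] at this
  linarith
end

section
/- Let F be an irreducible primitive integral binary quadratic form that is not negative definite, with discriminant d = f²·Δ, where Δ is the discriminant of the splitting field of F and f is the conductor. Then there is a subset T of the unit group (ℤ/Δℤ)ˣ of cardinality φ(|Δ|)/2 such that every odd prime p with (p mod Δ) ∈ T has the property: for all x, y ∈ ℤ, if p ∣ F(x, y) then p² ∣ F(x, y). -/
open MvPolynomial
open scoped NumberTheorySymbols

/-- The binary quadratic form `a·x² + b·x·y + c·y²`, viewed as a polynomial over `ℚ`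
(irreducibility of the form means irreducibility of this polynomial). -/
noncomputable def qfPoly (a b c : ℤ) : MvPolynomial (Fin 2) ℚ :=
  C (a : ℚ) * X 0 ^ 2 + C (b : ℚ) * X 0 * X 1 + C (c : ℚ) * X 1 ^ 2

/-- `Δ` is a fundamental discriminant, i.e. the discriminant of a quadratic number field:
either `Δ ≡ 1 (mod 4)` and squarefree, or `Δ = 4m` with `m ≡ 2, 3 (mod 4)` squarefree. -/
def IsFundamentalDiscriminant (Δ : ℤ) : Prop :=
  (Δ % 4 = 1 ∧ Squarefree Δ) ∨
    (Δ % 4 = 0 ∧ ((Δ / 4) % 4 = 2 ∨ (Δ / 4) % 4 = 3) ∧ Squarefree (Δ / 4))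

lemma kron_one_mod_four {Δ : ℤ} (h1 : Δ % 4 = 1) {n : ℕ} (hn : Odd n) :
    J(Δ | n) = J(((n % Δ.natAbs : ℕ) : ℤ) | Δ.natAbs) := by
  have hn2 := Nat.odd_iff.mp hn
  have hcast : ∀ q : ℕ, J((n : ℤ) | q) = J(((n % q : ℕ) : ℤ) | q) := by
    intro q
    rw [jacobiSym.mod_left (n : ℤ) q]
    congr 1
  rcases Int.natAbs_eq Δ with h | h
  · have hD4 : Δ.natAbs % 4 = 1 := by omega
    conv_lhs => rw [h]
    rw [jacobiSym.quadratic_reciprocity_one_mod_four hD4 hn, hcast]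
  · have hD4 : Δ.natAbs % 4 = 3 := by omega
    have hDo : Odd Δ.natAbs := Nat.odd_iff.mpr (by omega)
    conv_lhs => rw [h]
    rw [show (-(Δ.natAbs : ℤ)) = -1 * (Δ.natAbs : ℤ) by ring, jacobiSym.mul_left,
      jacobiSym.at_neg_one hn]
    rcases Nat.odd_mod_four_iff.mp hn2 with hn4 | hn4
    · rw [ZMod.χ₄_nat_one_mod_four hn4, one_mul,
        jacobiSym.quadratic_reciprocity_one_mod_four' hDo hn4, hcast]
    · rw [ZMod.χ₄_nat_three_mod_four hn4,
        jacobiSym.quadratic_reciprocity_three_mod_four hD4 hn4, hcast]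
      ring

lemma jacobi_odd_left {w : ℤ} (hw : w % 2 = 1) {n : ℕ} (hn : Odd n) :
    J(w | n) = (if w < 0 ∧ n % 4 = 3 then (-1 : ℤ) else 1) *
      ((if w.natAbs % 4 = 3 ∧ n % 4 = 3 then (-1 : ℤ) else 1) *
        J(((n % w.natAbs : ℕ) : ℤ) | w.natAbs)) := by
  have hn2 := Nat.odd_iff.mp hn
  have hw0 : w ≠ 0 := by omega
  have hq2 : w.natAbs % 2 = 1 := by omega
  have key : J((w.natAbs : ℤ) | n) =
      (if w.natAbs % 4 = 3 ∧ n % 4 = 3 then (-1 : ℤ) else 1) *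
        J(((n % w.natAbs : ℕ) : ℤ) | w.natAbs) := by
    rw [← jacobiSym.quadratic_reciprocity_if hq2 hn2]
    have : J((n : ℤ) | w.natAbs) = J(((n % w.natAbs : ℕ) : ℤ) | w.natAbs) := by
      rw [jacobiSym.mod_left (n : ℤ) w.natAbs]
      congr 1
    rw [← this]
    split_ifs <;> ring
  rcases Int.natAbs_eq w with h | h
  · have hwpos : ¬(w < 0 ∧ n % 4 = 3) := by
      rintro ⟨hlt, -⟩; omega
    rw [if_neg hwpos, one_mul]
    conv_lhs => rw [h]
    exact key
  · have hwneg : w < 0 := by omega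
    conv_lhs => rw [h]
    rw [show (-(w.natAbs : ℤ)) = -1 * (w.natAbs : ℤ) by ring, jacobiSym.mul_left,
      jacobiSym.at_neg_one hn, key]
    rcases Nat.odd_mod_four_iff.mp hn2 with hn4 | hn4
    · rw [ZMod.χ₄_nat_one_mod_four hn4]
      simp [hn4]

    · rw [ZMod.χ₄_nat_three_mod_four hn4]
      simp only [hn4, and_true]
      rw [if_pos hwneg]

lemma kron_congr {Δ : ℤ} (hΔ : Δ % 4 = 1 ∨ (Δ % 4 = 0 ∧ ((Δ / 4) % 4 = 2 ∨ (Δ / 4) % 4 = 3)))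
    {m n : ℕ} (hm : Odd m) (hn : Odd n) (h : m % Δ.natAbs = n % Δ.natAbs) :
    J(Δ | m) = J(Δ | n) := by
  have hmeq : m ≡ n [MOD Δ.natAbs] := h
  rcases hΔ with h1 | ⟨h0, h04⟩
  · rw [kron_one_mod_four h1 hm, kron_one_mod_four h1 hn, h]
  · have hm2 := Nat.odd_iff.mp hm
    have hn2 := Nat.odd_iff.mp hn
    have em : J(Δ/4 | m) = J(Δ | m) := jacobiSym.div_four_left h0 hm2
    have en : J(Δ/4 | n) = J(Δ | n) := jacobiSym.div_four_left h0 hn2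
    rw [← em, ← en]
    rcases h04 with h2 | h3
    · have hw2 : (Δ/4) % 2 = 0 := by omega
      have hwodd : (Δ/4/2) % 2 = 1 := by omega
      have hD : Δ.natAbs = 8 * (Δ/4/2).natAbs := by omega
      have h8' : m % 8 = n % 8 := Nat.ModEq.of_dvd ⟨(Δ/4/2).natAbs, hD⟩ hmeq
      have h4' : m % 4 = n % 4 := Nat.ModEq.of_dvd ⟨2 * (Δ/4/2).natAbs, by omega⟩ hmeq
      have hq : m % (Δ/4/2).natAbs = n % (Δ/4/2).natAbs :=
        Nat.ModEq.of_dvd ⟨8, by omega⟩ hmeq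
      rw [← jacobiSym.even_odd (a := Δ/4) hw2 hm2, ← jacobiSym.even_odd (a := Δ/4) hw2 hn2,
        jacobi_odd_left hwodd hm, jacobi_odd_left hwodd hn, h8', h4', hq]
    · have hwodd : (Δ/4) % 2 = 1 := by omega
      have hD : Δ.natAbs = 4 * (Δ/4).natAbs := by omega
      have h4' : m % 4 = n % 4 := Nat.ModEq.of_dvd ⟨(Δ/4).natAbs, hD⟩ hmeq
      have hq : m % (Δ/4).natAbs = n % (Δ/4).natAbs := Nat.ModEq.of_dvd ⟨4, by omega⟩ hmeq
      rw [jacobi_odd_left hwodd hm, jacobi_odd_left hwodd hn, h4', hq]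

lemma jac_mod_nat (k q : ℕ) : J(((k % q : ℕ) : ℤ) | q) = J((k : ℤ) | q) := by
  rw [jacobiSym.mod_left (k : ℤ) q]
  congr 1

lemma cop_of_modeq_one {k M : ℕ} (h : k ≡ 1 [MOD M]) : Nat.Coprime k M := by
  have h' : k % M = 1 % M := h
  have : Nat.gcd M k = 1 :=
    calc Nat.gcd M k = Nat.gcd (k % M) M := Nat.gcd_rec M k
      _ = Nat.gcd (1 % M) M := by rw [h']
      _ = Nat.gcd M 1 := (Nat.gcd_rec M 1).symm
      _ = 1 := Nat.gcd_one_right M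
  exact Nat.coprime_comm.mp this

lemma exists_aux {qq : ℕ} (hsq : Squarefree qq) (hodd : Odd qq) (h1 : qq ≠ 1) :
    ∃ k : ℕ, k % 8 = 1 ∧ Nat.Coprime k (8 * qq) ∧ J((k : ℤ) | qq) = -1 := by
  have hq0 : qq ≠ 0 := hsq.ne_zero
  have hlp : qq.minFac.Prime := Nat.minFac_prime h1
  set ℓ := qq.minFac with hldef
  have hld : ℓ ∣ qq := Nat.minFac_dvd qq
  have h2q : ¬(2 ∣ qq) := by
    have := Nat.odd_iff.mp hodd
    omega
  have hlodd : ℓ ≠ 2 := fun h => h2q (h ▸ hld)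
  obtain ⟨r, hr⟩ := hld
  have hr0 : r ≠ 0 := by rintro rfl; omega
  have hnl : ∀ x : ℕ, ℓ ∣ x → ℓ * ℓ ∣ qq → False := fun x _ hxx => hlp.not_isUnit (hsq ℓ hxx)
  have hcoplr : ¬ ℓ ∣ r := fun hdvd =>
    hlp.not_isUnit (hsq ℓ (by rw [hr]; exact mul_dvd_mul_left ℓ hdvd))
  haveI : Fact ℓ.Prime := ⟨hlp⟩
  have hchar : ringChar (ZMod ℓ) ≠ 2 := by rw [ZMod.ringChar_zmod_n]; exact hlodd
  obtain ⟨b0, hb0⟩ := FiniteField.exists_nonsquare hchar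
  have hb0ne : b0 ≠ 0 := by rintro rfl; exact hb0 ⟨0, by ring⟩
  have hco : Nat.Coprime ℓ (8 * r) := by
    refine Nat.Coprime.mul_right ?_ ((Nat.Prime.coprime_iff_not_dvd hlp).mpr hcoplr)
    refine (Nat.Prime.coprime_iff_not_dvd hlp).mpr fun hdvd => hlodd ?_
    have : ℓ ∣ 2 ^ 3 := by norm_num at hdvd ⊢; exact hdvd
    exact (Nat.prime_dvd_prime_iff_eq hlp Nat.prime_two).mp (hlp.dvd_of_dvd_pow this)
  set K := Nat.chineseRemainder hco b0.val 1 with hKdef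
  obtain ⟨hk1, hk2⟩ := K.2
  set k := (K : ℕ) with hkdef
  have hk8 : k % 8 = 1 := by
    have h := Nat.ModEq.of_dvd ⟨r, rfl⟩ hk2
    have h' : k % 8 = 1 % 8 := h
    omega
  have hkl : k % ℓ = b0.val := by
    have h' : k % ℓ = b0.val % ℓ := hk1
    rw [h']
    exact Nat.mod_eq_of_lt (ZMod.val_lt b0)
  have hkr : k ≡ 1 [MOD r] := Nat.ModEq.of_dvd ⟨8, mul_comm 8 r⟩ hk2
  have hkcopl : Nat.Coprime k ℓ := by
    rw [Nat.coprime_comm]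
    refine (Nat.Prime.coprime_iff_not_dvd hlp).mpr fun hdvd => hb0ne ?_
    have h0 : k % ℓ = 0 := Nat.eq_zero_of_dvd_of_lt
      ((Nat.dvd_mod_iff dvd_rfl).mpr hdvd) (Nat.mod_lt k hlp.pos)
    rw [hkl] at h0
    exact (ZMod.val_eq_zero b0).mp h0
  have hkcop : Nat.Coprime k (8 * qq) := by
    rw [hr]
    have c8 : Nat.Coprime k 8 := cop_of_modeq_one (by
      show k % 8 = 1 % 8
      omega)
    have cr : Nat.Coprime k r := cop_of_modeq_one hkr
    exact Nat.Coprime.mul_right c8 (Nat.Coprime.mul_right hkcopl cr)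
  refine ⟨k, hk8, hkcop, ?_⟩
  haveI : NeZero r := ⟨hr0⟩
  haveI : NeZero ℓ := ⟨hlp.ne_zero⟩
  have hsplit : J((k : ℤ) | qq) = J((k : ℤ) | ℓ) * J((k : ℤ) | r) := by
    rw [hr]
    exact jacobiSym.mul_right _ ℓ r
  have e1 : J((k : ℤ) | ℓ) = -1 := by
    rw [← jac_mod_nat k ℓ, hkl]
    rw [← jacobiSym.legendreSym.to_jacobiSym]
    refine (legendreSym.eq_neg_one_iff ℓ).mpr ?_
    have : ((b0.val : ℤ) : ZMod ℓ) = b0 := by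
      push_cast
      exact ZMod.natCast_rightInverse b0
    rw [this]
    exact hb0
  have e2 : J((k : ℤ) | r) = 1 := by
    rw [← jac_mod_nat k r]
    have h1r : k % r = 1 % r := hkr
    rw [h1r, jac_mod_nat 1 r]
    exact jacobiSym.one_left r
  rw [hsplit, e1, e2]
  ring

lemma jac_modD {Δ : ℤ} (k : ℕ) : J(((k % Δ.natAbs : ℕ) : ℤ) | Δ.natAbs) = J((k : ℤ) | Δ.natAbs) :=
  jac_mod_nat k Δ.natAbs

lemma exists_jacobi_neg_one {Δ : ℤ} (hfund : IsFundamentalDiscriminant Δ) (hne : Δ ≠ 1) :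
    ∃ n : ℕ, Odd n ∧ Nat.Coprime n Δ.natAbs ∧ J(Δ | n) = -1 := by
  rcases hfund with ⟨h1, hsf⟩ | ⟨h0, h04, hsf⟩
  · have hD1 : Δ.natAbs ≠ 1 := by omega
    have hDodd : Odd Δ.natAbs := Nat.odd_iff.mpr (by omega)
    obtain ⟨k, hk8, hkcop, hkJ⟩ := exists_aux (Int.squarefree_natAbs.mpr hsf) hDodd hD1
    have hkodd : Odd k := Nat.odd_iff.mpr (by omega)
    refine ⟨k, hkodd, Nat.Coprime.coprime_dvd_right ⟨8, by ring⟩ hkcop, ?_⟩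
    rw [kron_one_mod_four h1 hkodd, jac_modD k]
    exact hkJ
  · rcases h04 with h2 | h3
    · by_cases hq1 : (Δ / 4 / 2).natAbs = 1
      · have hΔ : Δ = 8 ∨ Δ = -8 := by omega
        rcases hΔ with rfl | rfl
        · refine ⟨3, by decide, by decide, ?_⟩
          rw [← jacobiSym.div_four_left (by decide : (8 : ℤ) % 4 = 0) (by decide : 3 % 2 = 1)]
          rw [show (8 : ℤ) / 4 = 2 by decide, jacobiSym.at_two (by decide : Odd 3)]
          rw [ZMod.χ₈_nat_eq_if_mod_eight]
          norm_num
        · refine ⟨5, by decide, by decide, ?_⟩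
          rw [← jacobiSym.div_four_left (by decide : (-8 : ℤ) % 4 = 0) (by decide : 5 % 2 = 1)]
          rw [show (-8 : ℤ) / 4 = -2 by decide, jacobiSym.at_neg_two (by decide : Odd 5)]
          rw [ZMod.χ₈'_nat_eq_if_mod_eight]
          norm_num
      · have hdvd : Δ / 4 / 2 ∣ Δ / 4 := ⟨2, by omega⟩
        have hsw : Squarefree (Δ / 4 / 2).natAbs :=
          Int.squarefree_natAbs.mpr (hsf.squarefree_of_dvd hdvd)
        have hwodd : Odd (Δ / 4 / 2).natAbs := Nat.odd_iff.mpr (by omega)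
        obtain ⟨k, hk8, hkcop, hkJ⟩ := exists_aux hsw hwodd hq1
        have hkodd : Odd k := Nat.odd_iff.mpr (by omega)
        have hk2 : k % 2 = 1 := by omega
        have hD : Δ.natAbs = 8 * (Δ / 4 / 2).natAbs := by omega
        refine ⟨k, hkodd, by rw [hD]; exact hkcop, ?_⟩
        rw [← jacobiSym.div_four_left h0 hk2,
          ← jacobiSym.even_odd (by omega : (Δ / 4) % 2 = 0) hk2,
          if_neg (by omega), jacobi_odd_left (by omega : (Δ / 4 / 2) % 2 = 1) hkodd,
          if_neg (by rintro ⟨-, hh⟩; omega), if_neg (by rintro ⟨-, hh⟩; omega),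
          one_mul, one_mul, jac_mod_nat]
        exact hkJ
    · by_cases hq1 : (Δ / 4).natAbs = 1
      · have hΔ : Δ = -4 := by omega
        subst hΔ
        refine ⟨3, by decide, by decide, ?_⟩
        rw [← jacobiSym.div_four_left (by decide : (-4 : ℤ) % 4 = 0) (by decide : 3 % 2 = 1)]
        rw [show (-4 : ℤ) / 4 = -1 by decide, jacobiSym.at_neg_one (by decide : Odd 3)]
        exact ZMod.χ₄_nat_three_mod_four (by decide)
      · have hsw : Squarefree (Δ / 4).natAbs := Int.squarefree_natAbs.mpr hsf
        have hwodd : Odd (Δ / 4).natAbs := Nat.odd_iff.mpr (by omega)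
        obtain ⟨k, hk8, hkcop, hkJ⟩ := exists_aux hsw hwodd hq1
        have hkodd : Odd k := Nat.odd_iff.mpr (by omega)
        have hk2 : k % 2 = 1 := by omega
        have hD : Δ.natAbs = 4 * (Δ / 4).natAbs := by omega
        refine ⟨k, hkodd, Nat.Coprime.coprime_dvd_right ⟨2, by omega⟩ hkcop, ?_⟩
        rw [← jacobiSym.div_four_left h0 hk2,
          jacobi_odd_left (by omega : (Δ / 4) % 2 = 1) hkodd,
          if_neg (by rintro ⟨-, hh⟩; omega), if_neg (by rintro ⟨-, hh⟩; omega),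
          one_mul, one_mul, jac_mod_nat]
        exact hkJ

section OddRep

variable {D : ℕ}

def oddRep (u : (ZMod D)ˣ) : ℕ :=
  if Even ((u : ZMod D).val) then (u : ZMod D).val + D else (u : ZMod D).val

lemma oddRep_odd (u : (ZMod D)ˣ) : Odd (oddRep u) := by
  unfold oddRep
  have hcop := ZMod.val_coe_unit_coprime u
  split_ifs with h
  · rcases Nat.even_or_odd D with hD | hD
    · exfalso
      obtain ⟨t, ht⟩ := h
      obtain ⟨s, hs⟩ := hD
      have h2 : (2 : ℕ) ∣ Nat.gcd ((u : ZMod D).val) D :=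
        Nat.dvd_gcd ⟨t, by omega⟩ ⟨s, by omega⟩
      rw [hcop] at h2
      omega
    · exact h.add_odd hD
  · rw [Nat.even_iff] at h
    exact Nat.odd_iff.mpr (by omega)

lemma oddRep_coprime (u : (ZMod D)ˣ) : Nat.Coprime (oddRep u) D := by
  unfold oddRep
  have hcop := ZMod.val_coe_unit_coprime u
  split_ifs with h
  · exact Nat.coprime_add_self_left.mpr hcop
  · exact hcop

lemma oddRep_cast [NeZero D] (u : (ZMod D)ˣ) : ((oddRep u : ℕ) : ZMod D) = (u : ZMod D) := by
  have hv : (((u : ZMod D).val : ℕ) : ZMod D) = (u : ZMod D) := ZMod.natCast_rightInverse _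
  unfold oddRep
  split_ifs with h
  · rw [Nat.cast_add, ZMod.natCast_self, add_zero, hv]
  · exact hv

lemma oddRep_ne_zero (u : (ZMod D)ˣ) : oddRep u ≠ 0 := by
  have := oddRep_odd u
  rw [Nat.odd_iff] at this
  omega

end OddRep

def kronChar (Δ : ℤ) (u : (ZMod Δ.natAbs)ˣ) : ℤ := J(Δ | oddRep u)

lemma kronChar_eq {Δ : ℤ}
    (hΔ : Δ % 4 = 1 ∨ (Δ % 4 = 0 ∧ ((Δ / 4) % 4 = 2 ∨ (Δ / 4) % 4 = 3)))
    [NeZero Δ.natAbs] {n : ℕ} (hn : Odd n)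
    (u : (ZMod Δ.natAbs)ˣ) (h : (n : ZMod Δ.natAbs) = ↑u) : kronChar Δ u = J(Δ | n) := by
  apply kron_congr hΔ (oddRep_odd u) hn
  have hc : ((oddRep u : ℕ) : ZMod Δ.natAbs) = ((n : ℕ) : ZMod Δ.natAbs) := by
    rw [oddRep_cast, h]
  exact (ZMod.natCast_eq_natCast_iff _ _ _).mp hc

lemma kronChar_mul {Δ : ℤ}
    (hΔ : Δ % 4 = 1 ∨ (Δ % 4 = 0 ∧ ((Δ / 4) % 4 = 2 ∨ (Δ / 4) % 4 = 3)))
    [NeZero Δ.natAbs] (u v : (ZMod Δ.natAbs)ˣ) :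
    kronChar Δ (u * v) = kronChar Δ u * kronChar Δ v := by
  haveI : NeZero (oddRep u) := ⟨oddRep_ne_zero u⟩
  haveI : NeZero (oddRep v) := ⟨oddRep_ne_zero v⟩
  have h : ((oddRep u * oddRep v : ℕ) : ZMod Δ.natAbs) = ↑(u * v) := by
    rw [Nat.cast_mul, oddRep_cast, oddRep_cast, Units.val_mul]
  rw [kronChar_eq hΔ ((oddRep_odd u).mul (oddRep_odd v)) (u * v) h]
  exact jacobiSym.mul_right Δ _ _

lemma kronChar_pm (Δ : ℤ) (u : (ZMod Δ.natAbs)ˣ) :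
    kronChar Δ u = 1 ∨ kronChar Δ u = -1 := by
  apply jacobiSym.eq_one_or_neg_one
  have := (oddRep_coprime u).symm
  simpa [Int.gcd] using this

lemma eval_not_unit {P : MvPolynomial (Fin 2) ℚ} (v : Fin 2 → ℚ)
    (hz : MvPolynomial.eval v P = 0) : ¬ IsUnit P := by
  intro h
  have := h.map (MvPolynomial.eval v)
  rw [hz] at this
  exact (by norm_num : ¬ IsUnit (0 : ℚ)) this

lemma delta_ne_one {a b c Δ : ℤ} {f : ℕ} (hirr : Irreducible (qfPoly a b c))
    (hd : b ^ 2 - 4 * a * c = (f : ℤ) ^ 2 * Δ) : Δ ≠ 1 := by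
  intro h1
  subst h1
  have ha : (a : ℚ) ≠ 0 := by
    intro ha0
    have hfactor : qfPoly a b c = X 1 * (C (b : ℚ) * X 0 + C (c : ℚ) * X 1) := by
      unfold qfPoly
      rw [ha0, MvPolynomial.C_0]
      ring
    rcases hirr.isUnit_or_isUnit hfactor with h | h
    · exact eval_not_unit (fun _ => 0) (by simp) h
    · exact eval_not_unit ![(c : ℚ), -(b : ℚ)] (by simp; ring) h
  have hdq : (b : ℚ) ^ 2 - 4 * a * c = (f : ℚ) ^ 2 := by
    have := congrArg (fun t : ℤ => (t : ℚ)) hd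
    push_cast at this
    linarith
  have e1 : (a : ℚ) * (((b : ℚ) - (f : ℚ)) / (2 * (a : ℚ))) + ((b : ℚ) + (f : ℚ)) / 2 = (b : ℚ) := by
    field_simp
    ring
  have e2 : (((b : ℚ) + (f : ℚ)) / 2) * (((b : ℚ) - (f : ℚ)) / (2 * (a : ℚ))) = (c : ℚ) := by
    field_simp
    linear_combination hdq
  have hfactor : qfPoly a b c =
      (C (a : ℚ) * X 0 + C (((b : ℚ) + (f : ℚ)) / 2) * X 1) *
        (X 0 + C (((b : ℚ) - (f : ℚ)) / (2 * (a : ℚ))) * X 1) := by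
    have expand : (C (a : ℚ) * (X 0 : MvPolynomial (Fin 2) ℚ) + C (((b : ℚ) + (f : ℚ)) / 2) * X 1) *
        (X 0 + C (((b : ℚ) - (f : ℚ)) / (2 * (a : ℚ))) * X 1)
        = C (a : ℚ) * X 0 ^ 2
          + C ((a : ℚ) * (((b : ℚ) - (f : ℚ)) / (2 * (a : ℚ))) + ((b : ℚ) + (f : ℚ)) / 2) * X 0 * X 1
          + C ((((b : ℚ) + (f : ℚ)) / 2) * (((b : ℚ) - (f : ℚ)) / (2 * (a : ℚ)))) * X 1 ^ 2 := by
      simp only [MvPolynomial.C_add, MvPolynomial.C_mul]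
      ring
    rw [expand, e1, e2]
    rfl
  rcases hirr.isUnit_or_isUnit hfactor with h | h
  · exact eval_not_unit ![((b : ℚ) + (f : ℚ)) / 2, -(a : ℚ)] (by simp; ring) h
  · exact eval_not_unit ![-(((b : ℚ) - (f : ℚ)) / (2 * (a : ℚ))), 1] (by simp) h

/-- For an irreducible primitive integral binary quadratic form `F`, not negative definite,
with discriminant `d = f²Δ` (`Δ` the splitting field discriminant), there is a set
`T ⊆ (ℤ/Δℤ)ˣ` of cardinality `φ(|Δ|)/2` such that every odd prime `p` with
`(p mod Δ) ∈ T` satisfies: `p ∣ F(x,y)` implies `p² ∣ F(x,y)`. -/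
theorem exists_residue_classes_of_squarefull_primes
    (a b c Δ : ℤ) (f : ℕ)
    (hirr : Irreducible (qfPoly a b c))
    (hprim : Int.gcd (Int.gcd a b) c = 1)
    (hf : 0 < f)
    (hd : b ^ 2 - 4 * a * c = (f : ℤ) ^ 2 * Δ)
    (hfund : IsFundamentalDiscriminant Δ)
    (hnnd : ¬ ∀ x y : ℤ, (x ≠ 0 ∨ y ≠ 0) → a * x ^ 2 + b * x * y + c * y ^ 2 < 0) :
    ∃ T : Finset (ZMod Δ.natAbs)ˣ,
      2 * T.card = Nat.totient Δ.natAbs ∧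
      ∀ p : ℕ, p.Prime → Odd p →
        (∃ u ∈ T, ((u : ZMod Δ.natAbs) = (p : ZMod Δ.natAbs))) →
        ∀ x y : ℤ, (p : ℤ) ∣ a * x ^ 2 + b * x * y + c * y ^ 2 →
          (p : ℤ) ^ 2 ∣ a * x ^ 2 + b * x * y + c * y ^ 2 := by
  classical
  have hΔ4 : Δ % 4 = 1 ∨ (Δ % 4 = 0 ∧ ((Δ / 4) % 4 = 2 ∨ (Δ / 4) % 4 = 3)) := by
    rcases hfund with ⟨h, -⟩ | ⟨h, h2, -⟩
    exacts [Or.inl h, Or.inr ⟨h, h2⟩]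
  have hne1 : Δ ≠ 1 := delta_ne_one hirr hd
  have hΔ0 : Δ ≠ 0 := by
    rcases hΔ4 with h | ⟨-, h⟩ <;> omega
  haveI : NeZero Δ.natAbs := ⟨by omega⟩
  obtain ⟨n₀, hn₀odd, hn₀cop, hn₀J⟩ := exists_jacobi_neg_one hfund hne1
  set u₀ : (ZMod Δ.natAbs)ˣ := ZMod.unitOfCoprime n₀ hn₀cop with hu₀
  have hu₀val : kronChar Δ u₀ = -1 := by
    rw [kronChar_eq hΔ4 hn₀odd u₀ (ZMod.coe_unitOfCoprime n₀ hn₀cop)]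
    exact hn₀J
  refine ⟨Finset.univ.filter (fun u => kronChar Δ u = -1), ?_, ?_⟩
  · have hsplit := Finset.card_filter_add_card_filter_not
      (s := (Finset.univ : Finset (ZMod Δ.natAbs)ˣ))
      (p := fun u : (ZMod Δ.natAbs)ˣ => kronChar Δ u = -1)
    have hbij : (Finset.univ.filter
          (fun u : (ZMod Δ.natAbs)ˣ => ¬ kronChar Δ u = -1)).card
        = (Finset.univ.filter (fun u : (ZMod Δ.natAbs)ˣ => kronChar Δ u = -1)).card := by
      apply Finset.card_bij (fun u _ => u₀ * u)
      · intro u hu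
        simp only [Finset.mem_filter, Finset.mem_univ, true_and] at hu ⊢
        rw [kronChar_mul hΔ4, hu₀val]
        rcases kronChar_pm Δ u with h | h
        · rw [h]; ring
        · exact absurd h hu
      · intro u _ v _ h
        exact mul_left_cancel h
      · intro v hv
        simp only [Finset.mem_filter, Finset.mem_univ, true_and] at hv
        refine ⟨u₀⁻¹ * v, ?_, by rw [mul_inv_cancel_left]⟩
        simp only [Finset.mem_filter, Finset.mem_univ, true_and]
        intro hcon
        have hm := kronChar_mul hΔ4 u₀ (u₀⁻¹ * v)
        rw [mul_inv_cancel_left, hv, hu₀val, hcon] at hm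
        norm_num at hm
    have hcard : (Finset.univ : Finset (ZMod Δ.natAbs)ˣ).card = Nat.totient Δ.natAbs := by
      rw [Finset.card_univ, ZMod.card_units_eq_totient]
    omega
  · intro p hp hpodd hpT x y hpF
    obtain ⟨u, huT, hup⟩ := hpT
    simp only [Finset.mem_filter, Finset.mem_univ, true_and] at huT
    haveI : Fact p.Prime := ⟨hp⟩
    have hJp : J(Δ | p) = -1 := by
      rw [← kronChar_eq hΔ4 hpodd u hup.symm]
      exact huT
    have hprime : Prime (p : ℤ) := Nat.prime_iff_prime_int.mp hp
    have hp2 : p % 2 = 1 := Nat.odd_iff.mp hpodd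
    have hnsq : ¬ IsSquare ((Δ : ZMod p)) := ZMod.nonsquare_of_jacobiSym_eq_neg_one hJp
    by_cases hpf : (p : ℤ) ∣ (f : ℤ)
    · -- p ∣ f
      have hpd : (p : ℤ) ^ 2 ∣ b ^ 2 - 4 * a * c := by
        rw [hd]
        exact Dvd.dvd.mul_right (pow_dvd_pow_of_dvd hpf 2) Δ
      have hpd1 : (p : ℤ) ∣ b ^ 2 - 4 * a * c := dvd_trans ⟨p, by ring⟩ hpd
      have hpne4 : ¬ (p : ℤ) ∣ 4 := by
        intro h4
        have h4' : p ∣ 4 := Int.ofNat_dvd.mp (by exact_mod_cast h4)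
        have h2le := hp.two_le
        have h4le : p ≤ 4 := Nat.le_of_dvd (by norm_num) h4'
        interval_cases p <;> omega
      have hnotboth : ¬ ((p : ℤ) ∣ a ∧ (p : ℤ) ∣ c) := by
        rintro ⟨hpa, hpc⟩
        have hpb : (p : ℤ) ∣ b := by
          refine hprime.dvd_of_dvd_pow (n := 2) ?_
          have : (b : ℤ) ^ 2 = (b ^ 2 - 4 * a * c) + 4 * a * c := by ring
          rw [this]
          exact dvd_add hpd1 ((hpa.mul_left 4).mul_right c)
        have hg : (p : ℤ) ∣ (Int.gcd (Int.gcd a b) c : ℤ) :=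
          Int.dvd_coe_gcd (Int.dvd_coe_gcd hpa hpb) hpc
        rw [hprim] at hg
        have := Int.le_of_dvd one_pos hg
        have := hp.two_le
        omega
      by_cases hpa : (p : ℤ) ∣ a
      · have hpc : ¬ (p : ℤ) ∣ c := fun h => hnotboth ⟨hpa, h⟩
        have hid : 4 * c * (a * x ^ 2 + b * x * y + c * y ^ 2)
            = (2 * c * y + b * x) ^ 2 - (b ^ 2 - 4 * a * c) * x ^ 2 := by ring
        have h1 : (p : ℤ) ∣ (2 * c * y + b * x) ^ 2 := by
          have hsum : (2 * c * y + b * x) ^ 2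
              = 4 * c * (a * x ^ 2 + b * x * y + c * y ^ 2) + (b ^ 2 - 4 * a * c) * x ^ 2 := by
            ring
          rw [hsum]
          exact dvd_add (hpF.mul_left _) (hpd1.mul_right _)
        have h2 : (p : ℤ) ∣ 2 * c * y + b * x := hprime.dvd_of_dvd_pow h1
        have h3 : (p : ℤ) ^ 2 ∣ 4 * c * (a * x ^ 2 + b * x * y + c * y ^ 2) := by
          rw [hid]
          exact dvd_sub (by simpa [sq] using mul_dvd_mul h2 h2) (hpd.mul_right _)
        have hcop : IsCoprime ((p : ℤ)) (4 * c) := by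
          refine (Prime.coprime_iff_not_dvd hprime).mpr ?_
          intro h4c
          rcases hprime.2.2 _ _ h4c with h | h
          exacts [hpne4 h, hpc h]
        exact (show IsCoprime ((p:ℤ)^2) _ from hcop.pow_left).dvd_of_dvd_mul_left h3
      · have hid : 4 * a * (a * x ^ 2 + b * x * y + c * y ^ 2)
            = (2 * a * x + b * y) ^ 2 - (b ^ 2 - 4 * a * c) * y ^ 2 := by ring
        have h1 : (p : ℤ) ∣ (2 * a * x + b * y) ^ 2 := by
          have hsum : (2 * a * x + b * y) ^ 2
              = 4 * a * (a * x ^ 2 + b * x * y + c * y ^ 2) + (b ^ 2 - 4 * a * c) * y ^ 2 := by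
            ring
          rw [hsum]
          exact dvd_add (hpF.mul_left _) (hpd1.mul_right _)
        have h2 : (p : ℤ) ∣ 2 * a * x + b * y := hprime.dvd_of_dvd_pow h1
        have h3 : (p : ℤ) ^ 2 ∣ 4 * a * (a * x ^ 2 + b * x * y + c * y ^ 2) := by
          rw [hid]
          exact dvd_sub (by simpa [sq] using mul_dvd_mul h2 h2) (hpd.mul_right _)
        have hcop : IsCoprime ((p : ℤ)) (4 * a) := by
          refine (Prime.coprime_iff_not_dvd hprime).mpr ?_
          intro h4a
          rcases hprime.2.2 _ _ h4a with h | h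
          exacts [hpne4 h, hpa h]
        exact (show IsCoprime ((p:ℤ)^2) _ from hcop.pow_left).dvd_of_dvd_mul_left h3
    · -- p ∤ f : work modulo p
      have hfz : ((f : ℕ) : ZMod p) ≠ 0 := by
        rw [Ne, ZMod.natCast_eq_zero_iff]
        intro hdvd
        exact hpf (Int.natCast_dvd_natCast.mpr hdvd)
      have hcast : ((b ^ 2 - 4 * a * c : ℤ) : ZMod p)
          = (b : ZMod p) ^ 2 - 4 * (a : ZMod p) * (c : ZMod p) := by push_cast; ring
      have hnsq' : ¬ IsSquare (((b ^ 2 - 4 * a * c : ℤ) : ZMod p)) := by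
        rw [hd]
        rintro ⟨s, hs⟩
        push_cast at hs
        apply hnsq
        refine ⟨s * ((f : ZMod p))⁻¹, ?_⟩
        field_simp
        linear_combination hs
      have hFz : (a : ZMod p) * (x : ZMod p) ^ 2 + (b : ZMod p) * (x : ZMod p) * (y : ZMod p)
          + (c : ZMod p) * (y : ZMod p) ^ 2 = 0 := by
        have h0 := (ZMod.intCast_zmod_eq_zero_iff_dvd _ p).mpr hpF
        push_cast at h0
        linear_combination h0
      have hA : (a : ZMod p) ≠ 0 := by
        intro hA0
        apply hnsq'
        refine ⟨(b : ZMod p), ?_⟩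
        rw [hcast, hA0]
        ring
      have hY : (y : ZMod p) = 0 := by
        by_contra hY0
        apply hnsq'
        refine ⟨(2 * (a : ZMod p) * (x : ZMod p) + (b : ZMod p) * (y : ZMod p))
          * ((y : ZMod p))⁻¹, ?_⟩
        have hY2 : (y : ZMod p) ^ 2 ≠ 0 := pow_ne_zero _ hY0
        have ht : (2 * (a : ZMod p) * (x : ZMod p) + (b : ZMod p) * (y : ZMod p)) ^ 2
            = ((b : ZMod p) ^ 2 - 4 * (a : ZMod p) * (c : ZMod p)) * (y : ZMod p) ^ 2 := by
          linear_combination (4 * (a : ZMod p)) * hFz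
        have key : (b : ZMod p) ^ 2 - 4 * (a : ZMod p) * (c : ZMod p)
            = ((2 * (a : ZMod p) * (x : ZMod p) + (b : ZMod p) * (y : ZMod p))
                * ((y : ZMod p))⁻¹) ^ 2 := by
          rw [mul_pow, ht, inv_pow]
          exact (mul_inv_cancel_right₀ hY2 _).symm
        rw [hcast, key]
        ring
      have hX : (x : ZMod p) = 0 := by
        have h0 : (a : ZMod p) * (x : ZMod p) ^ 2 = 0 := by
          rw [← hFz, hY]
          ring
        rcases mul_eq_zero.mp h0 with h | h
        · exact absurd h hA
        · exact pow_eq_zero_iff (by norm_num) |>.mp h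
      have hxdvd : (p : ℤ) ∣ x := (ZMod.intCast_zmod_eq_zero_iff_dvd _ _).mp hX
      have hydvd : (p : ℤ) ∣ y := (ZMod.intCast_zmod_eq_zero_iff_dvd _ _).mp hY
      obtain ⟨x', rfl⟩ := hxdvd
      obtain ⟨y', rfl⟩ := hydvd
      exact ⟨a * x' ^ 2 + b * x' * y' + c * y' ^ 2, by ring⟩
end

section
/- Let K be a number field with ring of integers O_K, let M ⊆ O_K be a ℤ-submodule of finite index generating the ideal O_K M of O_K, and let S = {N_{K/ℚ}(α) / N(O_K M) : α ∈ M} ⊆ ℤ. Let p be a prime such that every prime ideal 𝔭 of O_K lying above p satisfies p² ∣ N(𝔭). Then for every m ∈ S, if p divides m then p² divides m. -/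
set_option synthInstance.maxHeartbeats 1000000
set_option maxHeartbeats 1000000

open NumberField

/-- If a prime `p` divides the norm of a nonzero ideal `J`, then there is a prime ideal
containing both `J` and `p`. -/
lemma exists_prime_ideal_of_prime_dvd_absNorm
    (K : Type) [Field K] [NumberField K] (J : Ideal (𝓞 K)) (p : ℕ) (hp : p.Prime)
    (hdvd : p ∣ Ideal.absNorm J) (hJ : Ideal.absNorm J ≠ 0) :
    ∃ P : Ideal (𝓞 K), P.IsPrime ∧ J ≤ P ∧ (p : 𝓞 K) ∈ P := by
  have hfin : Finite (𝓞 K ⧸ J) := (Ideal.absNorm_ne_zero_iff J).mp hJ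
  have : Fintype (𝓞 K ⧸ J) := Fintype.ofFinite _
  have hcard : p ∣ Fintype.card (𝓞 K ⧸ J) := by
    rwa [Ideal.absNorm_apply, Submodule.cardQuot_apply, Nat.card_eq_fintype_card] at hdvd
  have : Fact (Nat.Prime p) := ⟨hp⟩
  obtain ⟨y, hy⟩ := exists_prime_addOrderOf_dvd_card (G := 𝓞 K ⧸ J) p hcard
  -- the ideal generated by J and p is proper
  have hne : J ⊔ Ideal.span {(p : 𝓞 K)} ≠ ⊤ := by
    intro htop
    have h1 : (1 : 𝓞 K) ∈ J ⊔ Ideal.span {(p : 𝓞 K)} := htop ▸ Submodule.mem_top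
    obtain ⟨j, hj, z, hz, hjz⟩ := Submodule.mem_sup.mp h1
    obtain ⟨x, hx⟩ := Ideal.mem_span_singleton'.mp hz
    have hy0 : y ≠ 0 := by
      intro h0
      have := hy
      rw [h0, addOrderOf_zero] at this
      exact hp.one_lt.ne' this.symm
    have hpy : p • y = 0 := by
      rw [← hy]; exact addOrderOf_nsmul_eq_zero y
    -- y = 1 * y = (j + x * p) * y = x * (p • y) = 0 in the quotient
    have : y = 0 := by
      have h1q : (Ideal.Quotient.mk J) (x * (p : 𝓞 K)) = 1 := by
        have : (Ideal.Quotient.mk J) j = 0 := Ideal.Quotient.eq_zero_iff_mem.mpr hj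
        calc (Ideal.Quotient.mk J) (x * (p : 𝓞 K))
            = (Ideal.Quotient.mk J) (j + x * (p : 𝓞 K)) := by
              rw [map_add, this, zero_add]
          _ = 1 := by rw [← hx] at hjz; rw [hjz]; exact map_one _
      calc y = (Ideal.Quotient.mk J) (x * (p : 𝓞 K)) * y := by rw [h1q, one_mul]
        _ = (Ideal.Quotient.mk J) x * ((p : 𝓞 K ⧸ J) * y) := by
              rw [map_mul, mul_assoc]; norm_num
        _ = (Ideal.Quotient.mk J) x * (p • y) := by rw [nsmul_eq_mul]
        _ = 0 := by rw [hpy, mul_zero]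
    exact hy0 this
  obtain ⟨P, hPmax, hle⟩ := Ideal.exists_le_maximal _ hne
  refine ⟨P, hPmax.isPrime, le_trans le_sup_left hle, ?_⟩
  exact hle (le_sup_right (α := Ideal (𝓞 K)) (Ideal.mem_span_singleton_self _))

/-- Let `K` be a number field, `M ⊆ O_K` a ℤ-submodule of finite index, and
`S = {N_{K/ℚ}(α)/N(O_K·M) : α ∈ M}`. If `p` is a prime such that every prime ideal `𝔭` of
`O_K` above `p` satisfies `p² ∣ N(𝔭)`, then every `m ∈ S` divisible by `p` is divisible
by `p²`. -/
theorem squarefull_primes_for_norm_form_values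
    (K : Type) [Field K] [NumberField K]
    (M : Submodule ℤ (𝓞 K)) (hM : M.toAddSubgroup.index ≠ 0)
    (p : ℕ) (hp : p.Prime)
    (hploc : ∀ P : Ideal (𝓞 K), P.IsPrime → (p : 𝓞 K) ∈ P → p ^ 2 ∣ Ideal.absNorm P) :
    ∀ m : ℤ,
      (∃ α ∈ M, Algebra.norm ℤ α
        = m * (Ideal.absNorm (Ideal.span (M : Set (𝓞 K))) : ℤ)) →
      (p : ℤ) ∣ m → (p : ℤ) ^ 2 ∣ m := by
  intro m hm hpm
  rcases eq_or_ne m 0 with rfl | hm0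
  · exact dvd_zero _
  obtain ⟨α, hαM, hnorm⟩ := hm
  set I : Ideal (𝓞 K) := Ideal.span (M : Set (𝓞 K)) with hI
  -- I is nonzero since M has finite index
  have hMbot : M ≠ ⊥ := by
    intro h
    apply hM
    rw [h]
    have : (⊥ : Submodule ℤ (𝓞 K)).toAddSubgroup = ⊥ := rfl
    rw [this, AddSubgroup.index_bot]
    exact Nat.card_eq_zero_of_infinite
  have hIbot : I ≠ ⊥ := by
    intro h
    apply hMbot
    rw [Submodule.eq_bot_iff]
    intro x hx
    have hxI : x ∈ I := Ideal.subset_span hx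
    rw [h] at hxI
    exact Ideal.mem_bot.mp hxI
  have hNI : Ideal.absNorm I ≠ 0 := fun h => hIbot (Ideal.absNorm_eq_zero_iff.mp h)
  -- I divides the principal ideal (α)
  have hαI : α ∈ I := Ideal.subset_span hαM
  have hdvd : I ∣ Ideal.span {α} := Ideal.dvd_iff_le.mpr ((Ideal.span_singleton_le_iff_mem I).mpr hαI)
  obtain ⟨J, hJ⟩ := hdvd
  have hnormJ : (Algebra.norm ℤ α).natAbs = Ideal.absNorm I * Ideal.absNorm J := by
    rw [← Ideal.absNorm_span_singleton, hJ, map_mul]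
  have hmabs : m.natAbs = Ideal.absNorm J := by
    have h1 : (Algebra.norm ℤ α).natAbs = m.natAbs * Ideal.absNorm I := by
      rw [hnorm, Int.natAbs_mul, Int.natAbs_natCast]
    have := h1.symm.trans hnormJ
    exact Nat.eq_of_mul_eq_mul_left (Nat.pos_of_ne_zero hNI)
      (by rw [Nat.mul_comm (Ideal.absNorm I)]; exact this)
  have hpJ : p ∣ Ideal.absNorm J := by
    rw [← hmabs]
    have := Int.natAbs_dvd_natAbs.mpr hpm
    simpa using this
  have hJ0 : Ideal.absNorm J ≠ 0 := by
    rw [← hmabs]; simpa using hm0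
  obtain ⟨P, hPprime, hJP, hpP⟩ :=
    exists_prime_ideal_of_prime_dvd_absNorm K J p hp hpJ hJ0
  have hP2 : p ^ 2 ∣ Ideal.absNorm P := hploc P hPprime hpP
  have hPJ : Ideal.absNorm P ∣ Ideal.absNorm J := Ideal.absNorm_dvd_absNorm_of_le hJP
  have : p ^ 2 ∣ m.natAbs := hmabs ▸ hP2.trans hPJ
  have : ((p : ℤ)) ^ 2 ∣ (m.natAbs : ℤ) := by exact_mod_cast Int.ofNat_dvd.mpr this
  exact this.trans (Int.natAbs_dvd.mpr dvd_rfl)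
end
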